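/- The quantum Tsallis q-entropy T_q(ρ) = (1−q)⁻¹ (Tr(ρ^q) − 1) with q > 1 is subadditive: for any bipartite density operator ρ^{AB} with marginals ρ^A, ρ^B, one has T_q(ρ^{AB}) ≤ T_q(ρ^A) + T_q(ρ^B). -/

import Mathlib

open ComplexOrder Matrix

noncomputable def ptraceB {A B : Type*} [Fintype B] (ρ : Matrix (A × B) (A × B) ℂ) :
    Matrix A A ℂ := Matrix.of fun a a' => ∑ b, ρ (a, b) (a', b)

noncomputable def ptraceA {A B : Type*} [Fintype A] (ρ : Matrix (A × B) (A × B) ℂ) :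
    Matrix B B ℂ := Matrix.of fun b b' => ∑ a, ρ (a, b) (a, b')

/-- Quantum Tsallis q-entropy `T_q(ρ) = (1-q)⁻¹ (Tr ρ^q − 1)`, computed via the
eigenvalues of a Hermitian matrix (junk value otherwise). -/
noncomputable def Tq {n : Type*} [Fintype n] [DecidableEq n]
    (q : ℝ) (ρ : Matrix n n ℂ) : ℝ :=
  if h : ρ.IsHermitian then (1 - q)⁻¹ * ((∑ j, h.eigenvalues j ^ q) - 1) else 0

open Kronecker Finset in
private lemma jensen_rpow {ι : Type*} [Fintype ι] {q : ℝ} (hq : 1 ≤ q)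
    (w z : ι → ℝ) (hw : ∀ i, 0 ≤ w i) (hw1 : ∑ i, w i = 1) (hz : ∀ i, 0 ≤ z i) :
    (∑ i, w i * z i) ^ q ≤ ∑ i, w i * z i ^ q :=
  Real.rpow_arith_mean_le_arith_mean_rpow Finset.univ w z (fun i _ => hw i) hw1 (fun i _ => hz i) hq

private lemma rpow_le_self' {x q : ℝ} (hx : 0 ≤ x) (hx1 : x ≤ 1) (hq : 1 ≤ q) : x ^ q ≤ x := by
  rcases eq_or_lt_of_le hx with h | h
  · rw [← h, Real.zero_rpow (by linarith)]
  · calc x ^ q ≤ x ^ (1:ℝ) := Real.rpow_le_rpow_of_exponent_ge h hx1 hq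
      _ = x := Real.rpow_one x

private lemma classical_key {ι κ : Type*} [Fintype ι] [Fintype κ] {q : ℝ} (hq : 1 < q)
    (p : ι → κ → ℝ) (hp : ∀ i j, 0 ≤ p i j) (hsum : ∑ i, ∑ j, p i j = 1) :
    (∑ i, (∑ j, p i j) ^ q) + (∑ j, (∑ i, p i j) ^ q) ≤ 1 + ∑ i, ∑ j, p i j ^ q := by
  set r : ι → ℝ := fun i => ∑ j, p i j with hr
  have hrnn : ∀ i, 0 ≤ r i := fun i => Finset.sum_nonneg fun j _ => hp i j
  have hr1 : ∀ i, r i ≤ 1 := by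
    intro i
    calc r i ≤ ∑ i, r i := Finset.single_le_sum (f := r) (fun i _ => hrnn i) (Finset.mem_univ i)
      _ = 1 := hsum
  set t : ι → ℝ := fun i => ∑ j, r i * (p i j / r i) ^ q with ht
  have stepA : ∀ i, r i ^ q - ∑ j, p i j ^ q ≤ r i - t i := by
    intro i
    rcases eq_or_lt_of_le (hrnn i) with h0 | h0
    · have hz : ∀ j, p i j = 0 := by
        intro j
        have h' := (Finset.sum_eq_zero_iff_of_nonneg (fun j _ => hp i j)).mp h0.symm
        exact h' j (Finset.mem_univ j)
      simp only [ht, ← h0]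
      simp [hz, Real.zero_rpow (show q ≠ 0 by linarith)]
    · have hs1 : (∑ j, (p i j / r i) ^ q) ≤ 1 := by
        have hd1 : ∑ j, p i j / r i = 1 := by
          rw [← Finset.sum_div]
          exact div_self (ne_of_gt h0)
        calc ∑ j, (p i j / r i) ^ q ≤ ∑ j, p i j / r i := by
              refine Finset.sum_le_sum fun j _ => rpow_le_self' (div_nonneg (hp i j) h0.le) ?_ hq.le
              rw [div_le_one h0]
              exact Finset.single_le_sum (fun j _ => hp i j) (Finset.mem_univ j)
          _ = 1 := hd1
      have h1 : ∑ j, p i j ^ q = r i ^ q * ∑ j, (p i j / r i) ^ q := by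
        rw [Finset.mul_sum]
        refine Finset.sum_congr rfl fun j _ => ?_
        rw [← Real.mul_rpow (hrnn i) (div_nonneg (hp i j) h0.le), mul_div_cancel₀ _ (ne_of_gt h0)]
      have h2 : t i = r i * ∑ j, (p i j / r i) ^ q := by rw [ht, Finset.mul_sum]
      have hrq : r i ^ q ≤ r i := rpow_le_self' (hrnn i) (hr1 i) hq.le
      have hsq : 0 ≤ ∑ j, (p i j / r i) ^ q :=
        Finset.sum_nonneg fun j _ => Real.rpow_nonneg (div_nonneg (hp i j) h0.le) q
      nlinarith [mul_nonneg (sub_nonneg.mpr hrq) (sub_nonneg.mpr hs1)]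
  have stepB : ∑ j, (∑ i, p i j) ^ q ≤ ∑ i, t i := by
    have hcomm : ∑ i, t i = ∑ j, ∑ i, r i * (p i j / r i) ^ q := Finset.sum_comm
    rw [hcomm]
    refine Finset.sum_le_sum fun j _ => ?_
    have hrec : ∀ i, r i * (p i j / r i) = p i j := by
      intro i
      rcases eq_or_lt_of_le (hrnn i) with h0 | h0
      · have hz := (Finset.sum_eq_zero_iff_of_nonneg (fun j _ => hp i j)).mp h0.symm
        simp [← h0, hz j (Finset.mem_univ j)]
      · field_simp
    calc (∑ i, p i j) ^ q = (∑ i, r i * (p i j / r i)) ^ q := by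
          rw [Finset.sum_congr rfl fun i _ => (hrec i).symm]
      _ ≤ ∑ i, r i * (p i j / r i) ^ q :=
          jensen_rpow hq.le r (fun i => p i j / r i) hrnn hsum
            (fun i => div_nonneg (hp i j) (hrnn i))
  have hAs := Finset.sum_le_sum fun i (_ : i ∈ Finset.univ) => stepA i
  rw [Finset.sum_sub_distrib, Finset.sum_sub_distrib, ← hr, hsum] at hAs
  linarith

private lemma pinch_key {m n : Type*} [Fintype m] [Fintype n] {q : ℝ} (hq : 1 ≤ q)
    (w : m → n → ℝ) (hw : ∀ i k, 0 ≤ w i k) (hrow : ∀ i, ∑ k, w i k = 1)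
    (hcol : ∀ k, ∑ i, w i k = 1) (lam : n → ℝ) (hlam : ∀ k, 0 ≤ lam k) :
    ∑ i, (∑ k, w i k * lam k) ^ q ≤ ∑ k, lam k ^ q := by
  calc ∑ i, (∑ k, w i k * lam k) ^ q ≤ ∑ i, ∑ k, w i k * lam k ^ q :=
      Finset.sum_le_sum fun i _ => jensen_rpow hq (w i) lam (hw i) (hrow i) hlam
    _ = ∑ k, ∑ i, w i k * lam k ^ q := Finset.sum_comm
    _ = ∑ k, lam k ^ q := by
      refine Finset.sum_congr rfl fun k _ => ?_
      rw [← Finset.sum_mul, hcol, one_mul]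

open Kronecker in
private lemma marginal_collapseB {A B : Type*} [Fintype A] [Fintype B] [DecidableEq B]
    (ρ : Matrix (A × B) (A × B) ℂ) (U : Matrix A A ℂ) (V : Matrix B B ℂ)
    (hV : V * Vᴴ = 1) (a a' : A) :
    ∑ b, ((U ⊗ₖ V)ᴴ * ρ * (U ⊗ₖ V)) (a, b) (a', b) = (Uᴴ * ptraceB ρ * U) a a' := by
  simp only [Matrix.mul_apply, conjTranspose_apply, kroneckerMap_apply, Finset.sum_mul,
    ptraceB, Matrix.of_apply, Finset.mul_sum]
  calc ∑ b : B, ∑ p : A × B, ∑ m : A × B,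
        star (U m.1 a * V m.2 b) * ρ m p * (U p.1 a' * V p.2 b)
      = ∑ p : A × B, ∑ m : A × B, ∑ b : B,
        star (U m.1 a * V m.2 b) * ρ m p * (U p.1 a' * V p.2 b) := by
        rw [Finset.sum_comm]
        exact Finset.sum_congr rfl fun p _ => Finset.sum_comm
    _ = ∑ p : A × B, ∑ m : A × B,
        (star (U m.1 a) * ρ m p * U p.1 a') * (V * Vᴴ) p.2 m.2 := by
        refine Finset.sum_congr rfl fun p _ => Finset.sum_congr rfl fun m _ => ?_
        rw [Matrix.mul_apply, Finset.mul_sum]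
        refine Finset.sum_congr rfl fun b _ => ?_
        simp only [conjTranspose_apply, star_mul']
        ring
    _ = ∑ p : A × B, ∑ m : A × B,
        (star (U m.1 a) * ρ m p * U p.1 a') * (1 : Matrix B B ℂ) p.2 m.2 := by rw [hV]
    _ = ∑ x : A, ∑ x_1 : A, ∑ i : B, star (U x_1 a) * ρ (x_1, i) (x, i) * U x a' := by
        simp only [Fintype.sum_prod_type, Matrix.one_apply, mul_ite, mul_one, mul_zero]
        simp only [Finset.sum_ite_eq, Finset.mem_univ, if_true]
        exact Finset.sum_congr rfl fun a2 _ => Finset.sum_comm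

open Kronecker in
private lemma marginal_collapseA {A B : Type*} [Fintype A] [Fintype B] [DecidableEq A]
    (ρ : Matrix (A × B) (A × B) ℂ) (U : Matrix A A ℂ) (V : Matrix B B ℂ)
    (hU : U * Uᴴ = 1) (b b' : B) :
    ∑ a, ((U ⊗ₖ V)ᴴ * ρ * (U ⊗ₖ V)) (a, b) (a, b') = (Vᴴ * ptraceA ρ * V) b b' := by
  simp only [Matrix.mul_apply, conjTranspose_apply, kroneckerMap_apply, Finset.sum_mul,
    ptraceA, Matrix.of_apply, Finset.mul_sum]
  calc ∑ a : A, ∑ p : A × B, ∑ m : A × B,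
        star (U m.1 a * V m.2 b) * ρ m p * (U p.1 a * V p.2 b')
      = ∑ p : A × B, ∑ m : A × B, ∑ a : A,
        star (U m.1 a * V m.2 b) * ρ m p * (U p.1 a * V p.2 b') := by
        rw [Finset.sum_comm]
        exact Finset.sum_congr rfl fun p _ => Finset.sum_comm
    _ = ∑ p : A × B, ∑ m : A × B,
        (star (V m.2 b) * ρ m p * V p.2 b') * (U * Uᴴ) p.1 m.1 := by
        refine Finset.sum_congr rfl fun p _ => Finset.sum_congr rfl fun m _ => ?_
        rw [Matrix.mul_apply, Finset.mul_sum]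
        refine Finset.sum_congr rfl fun a _ => ?_
        simp only [conjTranspose_apply, star_mul']
        ring
    _ = ∑ p : A × B, ∑ m : A × B,
        (star (V m.2 b) * ρ m p * V p.2 b') * (1 : Matrix A A ℂ) p.1 m.1 := by rw [hU]
    _ = ∑ x : B, ∑ x_1 : B, ∑ i : A, star (V x_1 b) * ρ (i, x_1) (i, x) * V x b' := by
        simp only [Fintype.sum_prod_type, Matrix.one_apply, mul_ite, mul_one, mul_zero]
        have h1 : ∀ (x : A) (x1 : B),
            (∑ x2 : A, ∑ x3 : B,
              if x = x2 then star (V x3 b) * ρ (x2, x3) (x, x1) * V x1 b' else 0)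
            = ∑ x3 : B, star (V x3 b) * ρ (x, x3) (x, x1) * V x1 b' := by
          intro x x1
          rw [Finset.sum_comm]
          simp [Finset.sum_ite_eq]
        simp only [h1]
        rw [Finset.sum_comm]
        exact Finset.sum_congr rfl fun _ _ => Finset.sum_comm

/-- Subadditivity of the Tsallis q-entropy for `q > 1`. -/
theorem stmt4 {A B : Type*} [Fintype A] [Fintype B] [DecidableEq A] [DecidableEq B]
    (q : ℝ) (hq : 1 < q)
    (ρ : Matrix (A × B) (A × B) ℂ) (hρ : ρ.PosSemidef) (htr : ρ.trace = 1) :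
    Tq q ρ ≤ Tq q (ptraceB ρ) + Tq q (ptraceA ρ) := by
  classical
  have hH : ρ.IsHermitian := hρ.1
  have hAh : (ptraceB ρ).IsHermitian := by
    refine Matrix.IsHermitian.ext fun a a' => ?_
    simp only [ptraceB, Matrix.of_apply, star_sum]
    exact Finset.sum_congr rfl fun b _ => hH.apply (a, b) (a', b)
  have hBh : (ptraceA ρ).IsHermitian := by
    refine Matrix.IsHermitian.ext fun b b' => ?_
    simp only [ptraceA, Matrix.of_apply, star_sum]
    exact Finset.sum_congr rfl fun a _ => hH.apply (a, b) (a, b')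
  -- notation
  set lam := hH.eigenvalues with hlamdef
  set μ := hAh.eigenvalues with hμdef
  set ν := hBh.eigenvalues with hνdef
  set W : Matrix (A × B) (A × B) ℂ := (hH.eigenvectorUnitary : Matrix (A × B) (A × B) ℂ) with hWdef
  set U : Matrix A A ℂ := (hAh.eigenvectorUnitary : Matrix A A ℂ) with hUdef
  set V : Matrix B B ℂ := (hBh.eigenvectorUnitary : Matrix B B ℂ) with hVdef
  have hW1 : W * Wᴴ = 1 := by
    rw [← star_eq_conjTranspose]
    exact Matrix.mem_unitaryGroup_iff.mp hH.eigenvectorUnitary.2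
  have hW2 : Wᴴ * W = 1 := by
    rw [← star_eq_conjTranspose]
    exact Matrix.mem_unitaryGroup_iff'.mp hH.eigenvectorUnitary.2
  have hU1 : U * Uᴴ = 1 := by
    rw [← star_eq_conjTranspose]
    exact Matrix.mem_unitaryGroup_iff.mp hAh.eigenvectorUnitary.2
  have hV1 : V * Vᴴ = 1 := by
    rw [← star_eq_conjTranspose]
    exact Matrix.mem_unitaryGroup_iff.mp hBh.eigenvectorUnitary.2
  set K : Matrix (A × B) (A × B) ℂ := Matrix.kroneckerMap (· * ·) U V with hKdef
  have hKH : Kᴴ = Matrix.kroneckerMap (· * ·) Uᴴ Vᴴ := by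
    ext ⟨a, b⟩ ⟨c, d⟩
    simp [hKdef, conjTranspose_apply, Matrix.kroneckerMap_apply, star_mul', mul_comm]
  have hK1 : K * Kᴴ = 1 := by
    rw [hKH, hKdef, ← Matrix.mul_kronecker_mul, hU1, hV1, Matrix.one_kronecker_one]
  have hK2 : Kᴴ * K = 1 := by
    rw [hKH, hKdef, ← Matrix.mul_kronecker_mul]
    have hU2 : Uᴴ * U = 1 := by
      rw [← star_eq_conjTranspose]
      exact Matrix.mem_unitaryGroup_iff'.mp hAh.eigenvectorUnitary.2
    have hV2 : Vᴴ * V = 1 := by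
      rw [← star_eq_conjTranspose]
      exact Matrix.mem_unitaryGroup_iff'.mp hBh.eigenvectorUnitary.2
    rw [hU2, hV2, Matrix.one_kronecker_one]
  set Q : Matrix (A × B) (A × B) ℂ := Kᴴ * W with hQdef
  have hQH : Qᴴ = Wᴴ * K := by
    rw [hQdef, conjTranspose_mul, conjTranspose_conjTranspose]
  have hQ1 : Q * Qᴴ = 1 := by
    rw [hQdef, hQH, Matrix.mul_assoc, ← Matrix.mul_assoc W, hW1, Matrix.one_mul, hK2]
  have hQ2 : Qᴴ * Q = 1 := by
    rw [hQdef, hQH, Matrix.mul_assoc, ← Matrix.mul_assoc K, hK1, Matrix.one_mul, hW2]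
  set D : Matrix (A × B) (A × B) ℂ := Matrix.diagonal (RCLike.ofReal ∘ lam) with hDdef
  have hspec : ρ = W * D * Wᴴ := by
    rw [hDdef, hWdef, hlamdef, ← star_eq_conjTranspose]
    exact hH.spectral_theorem
  have hM : Kᴴ * ρ * K = Q * D * Qᴴ := by
    rw [hspec, hQdef, hQH]
    simp only [Matrix.mul_assoc]
  -- the doubly stochastic weights and the pinched distribution
  set w : A × B → A × B → ℝ := fun m k => Complex.normSq (Q m k) with hwdef
  set p : A × B → ℝ := fun m => ∑ k, w m k * lam k with hpdef
  have hwnn : ∀ m k, 0 ≤ w m k := fun m k => Complex.normSq_nonneg _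
  have hlamnn : ∀ k, 0 ≤ lam k := fun k => hρ.eigenvalues_nonneg k
  have hpnn : ∀ m, 0 ≤ p m := fun m =>
    Finset.sum_nonneg fun k _ => mul_nonneg (hwnn m k) (hlamnn k)
  have hdiag : ∀ m, (Kᴴ * ρ * K) m m = (p m : ℂ) := by
    intro m
    rw [hM, Matrix.mul_apply, hpdef]
    push_cast
    refine Finset.sum_congr rfl fun k _ => ?_
    rw [Matrix.mul_diagonal, conjTranspose_apply]
    have : Q m k * star (Q m k) = (Complex.normSq (Q m k) : ℂ) := by
      rw [Complex.star_def, Complex.mul_conj]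
    calc Q m k * (RCLike.ofReal ∘ lam) k * star (Q m k)
        = (Q m k * star (Q m k)) * ((lam k : ℝ) : ℂ) := by
          show Q m k * ((lam k : ℝ) : ℂ) * star (Q m k) = _
          ring
      _ = ↑(w m k) * ↑(lam k) := by rw [this]
  have hrow : ∀ m, ∑ k, w m k = 1 := by
    intro m
    have hc : ((∑ k, w m k : ℝ) : ℂ) = 1 := by
      push_cast
      have h := congrFun (congrFun hQ1 m) m
      rw [Matrix.mul_apply] at h
      calc ∑ k, ((w m k : ℝ) : ℂ) = ∑ k, Q m k * Qᴴ k m := by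
            refine Finset.sum_congr rfl fun k _ => ?_
            rw [conjTranspose_apply, Complex.star_def, Complex.mul_conj]
        _ = 1 := by rw [h, Matrix.one_apply_eq]
    exact_mod_cast hc
  have hcol : ∀ k, ∑ m, w m k = 1 := by
    intro k
    have hc : ((∑ m, w m k : ℝ) : ℂ) = 1 := by
      push_cast
      have h := congrFun (congrFun hQ2 k) k
      rw [Matrix.mul_apply] at h
      calc ∑ m, ((w m k : ℝ) : ℂ) = ∑ m, Qᴴ k m * Q m k := by
            refine Finset.sum_congr rfl fun m _ => ?_
            rw [conjTranspose_apply, Complex.star_def, mul_comm, Complex.mul_conj]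
        _ = 1 := by rw [h, Matrix.one_apply_eq]
    exact_mod_cast hc
  have hμm : ∀ a, ∑ b, p (a, b) = μ a := by
    intro a
    have hc : ((∑ b, p (a, b) : ℝ) : ℂ) = ((μ a : ℝ) : ℂ) := by
      push_cast
      calc ∑ b, ((p (a, b) : ℝ) : ℂ) = ∑ b, (Kᴴ * ρ * K) (a, b) (a, b) :=
            Finset.sum_congr rfl fun b _ => (hdiag (a, b)).symm
        _ = (Uᴴ * ptraceB ρ * U) a a := by
            rw [hKdef]
            exact marginal_collapseB ρ U V hV1 a a
        _ = ((μ a : ℝ) : ℂ) := by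
            rw [← star_eq_conjTranspose, (show star U * ptraceB ρ * U = diagonal (RCLike.ofReal ∘ μ) from (Unitary.conjStarAlgAut_star_apply (S := ℂ) _ _).symm.trans hAh.conjStarAlgAut_star_eigenvectorUnitary)]
            simp [Matrix.diagonal_apply_eq]
    exact_mod_cast hc
  have hνm : ∀ b, ∑ a, p (a, b) = ν b := by
    intro b
    have hc : ((∑ a, p (a, b) : ℝ) : ℂ) = ((ν b : ℝ) : ℂ) := by
      push_cast
      calc ∑ a, ((p (a, b) : ℝ) : ℂ) = ∑ a, (Kᴴ * ρ * K) (a, b) (a, b) :=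
            Finset.sum_congr rfl fun a _ => (hdiag (a, b)).symm
        _ = (Vᴴ * ptraceA ρ * V) b b := by
            rw [hKdef]
            exact marginal_collapseA ρ U V hU1 b b
        _ = ((ν b : ℝ) : ℂ) := by
            rw [← star_eq_conjTranspose, (show star V * ptraceA ρ * V = diagonal (RCLike.ofReal ∘ ν) from (Unitary.conjStarAlgAut_star_apply (S := ℂ) _ _).symm.trans hBh.conjStarAlgAut_star_eigenvectorUnitary)]
            simp [Matrix.diagonal_apply_eq]
    exact_mod_cast hc
  have htrA : (ptraceB ρ).trace = 1 := by
    rw [← htr]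
    simp [Matrix.trace, Matrix.diag, ptraceB, Fintype.sum_prod_type]
  have hμ1 : ∑ a, μ a = 1 := by
    have hc : ((∑ a, μ a : ℝ) : ℂ) = 1 := by
      push_cast
      calc ∑ a, ((μ a : ℝ) : ℂ) = (Matrix.diagonal (RCLike.ofReal ∘ μ)).trace :=
            (Matrix.trace_diagonal _).symm
        _ = (star U * ptraceB ρ * U).trace := by rw [(show star U * ptraceB ρ * U = diagonal (RCLike.ofReal ∘ μ) from (Unitary.conjStarAlgAut_star_apply (S := ℂ) _ _).symm.trans hAh.conjStarAlgAut_star_eigenvectorUnitary)]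
        _ = (ptraceB ρ).trace := by
            rw [Matrix.trace_mul_cycle, star_eq_conjTranspose, hU1, Matrix.one_mul]
        _ = 1 := htrA
    exact_mod_cast hc
  have hptot : ∑ m : A × B, p m = 1 := by
    rw [Fintype.sum_prod_type, Finset.sum_congr rfl fun a _ => hμm a]
    exact hμ1
  have hclass := classical_key hq (fun a b => p (a, b)) (fun a b => hpnn (a, b))
    (by rw [← Fintype.sum_prod_type]; exact hptot)
  have hSA : ∑ a, (∑ b, p (a, b)) ^ q = ∑ a, μ a ^ q :=
    Finset.sum_congr rfl fun a _ => by rw [hμm a]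
  have hSB : ∑ b, (∑ a, p (a, b)) ^ q = ∑ b, ν b ^ q :=
    Finset.sum_congr rfl fun b _ => by rw [hνm b]
  have h2 : ∑ a, ∑ b, p (a, b) ^ q = ∑ m : A × B, p m ^ q := (Fintype.sum_prod_type (fun m : A × B => p m ^ q)).symm
  have hpinch : ∑ m : A × B, p m ^ q ≤ ∑ k, lam k ^ q := by
    simp only [hpdef]
    exact pinch_key hq.le w hwnn hrow hcol lam hlamnn
  rw [hSA, hSB, h2] at hclass
  have key : (∑ a, μ a ^ q) + (∑ b, ν b ^ q) ≤ 1 + ∑ k, lam k ^ q := by linarith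
  unfold Tq
  rw [dif_pos hH, dif_pos hAh, dif_pos hBh]
  have hc : (1 - q)⁻¹ < 0 := inv_lt_zero.mpr (by linarith)
  have h3 : 0 ≤ (-(1 - q)⁻¹) *
      (1 + (∑ k, lam k ^ q) - (∑ a, μ a ^ q) - (∑ b, ν b ^ q)) :=
    mul_nonneg (by linarith) (by linarith)
  nlinarith [h3]
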